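/- Let E be a set with, for each subset D ⊆ E, a collection C_D of D-good subsets satisfying the goodness axioms (a)-(e), and suppose D ⊆ E is such that the minimal good partition of D has finitely many blocks, say s(D) blocks. Then D contains a finite subset F with s(F) = s(D), where s(F) is the number of blocks of the minimal good partition of F. -/

import Mathlib

/-- The maximal members of the collection `C D` of `D`-good sets: the blocks of the minimal
good partition of `D`. -/
def maxGood {E : Type*} (C : Set E → Set (Set E)) (D : Set E) : Set (Set E) :=
  {F | F ∈ C D ∧ ∀ G ∈ C D, F ⊆ G → F = G}

namespace GoodAux

open Set

variable {E : Type*}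

/-- The goodness axioms (a)–(e) bundled as a structure. -/
structure GoodAx (C : Set E → Set (Set E)) : Prop where
  sub : ∀ D : Set E, ∀ F ∈ C D, F ⊆ D
  singletons : ∀ D : Set E, ∀ x ∈ D, {x} ∈ C D
  subsets : ∀ D : Set E, ∀ F ∈ C D, ∀ F' ⊆ F, F' ∈ C D
  unions : ∀ D : Set E, ∀ 𝒮 ⊆ C D, (⋂₀ 𝒮).Nonempty → ⋃₀ 𝒮 ∈ C D
  restrict : ∀ D₁ D₂ : Set E, D₁ ⊆ D₂ → ∀ F ∈ C D₂, F ∩ D₁ ∈ C D₁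
  chain : ∀ 𝒟 : Set (Set E), IsChain (· ⊆ ·) 𝒟 → ∀ F ⊆ ⋃₀ 𝒟,
      (∀ D' ∈ 𝒟, F ∩ D' ∈ C D') → F ∈ C (⋃₀ 𝒟)

/-- `x` and `y` lie in a common `D`-good set. -/
def Conn (C : Set E → Set (Set E)) (D : Set E) (x y : E) : Prop :=
  ∃ G ∈ C D, x ∈ G ∧ y ∈ G

/-- The block of `x` in the minimal good partition of `D`. -/
def Blk (C : Set E → Set (Set E)) (D : Set E) (x : E) : Set E :=
  ⋃₀ {G | G ∈ C D ∧ x ∈ G}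

variable {C : Set E → Set (Set E)} {D W : Set E} {x y z : E}

theorem Conn.symm (h : Conn C D x y) : Conn C D y x := by
  obtain ⟨G, hG, hx, hy⟩ := h; exact ⟨G, hG, hy, hx⟩

theorem GoodAx.blk_mem (h : GoodAx C) (hx : x ∈ D) : Blk C D x ∈ C D := by
  refine h.unions D _ (fun G hG => hG.1) ⟨x, ?_⟩
  exact fun G hG => hG.2

theorem GoodAx.mem_blk_self (h : GoodAx C) (hx : x ∈ D) : x ∈ Blk C D x :=
  ⟨{x}, ⟨h.singletons D x hx, rfl⟩, rfl⟩

theorem mem_blk_of_conn (hc : Conn C D x y) : y ∈ Blk C D x := by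
  obtain ⟨G, hG, hx, hy⟩ := hc; exact ⟨G, ⟨hG, hx⟩, hy⟩

theorem conn_of_mem_blk (hy : y ∈ Blk C D x) : Conn C D x y := by
  obtain ⟨G, ⟨hG, hx⟩, hyG⟩ := hy; exact ⟨G, hG, hx, hyG⟩

theorem GoodAx.blk_maxGood (h : GoodAx C) (hx : x ∈ D) : Blk C D x ∈ maxGood C D := by
  refine ⟨h.blk_mem hx, fun G hG hsub => subset_antisymm hsub ?_⟩
  exact subset_sUnion_of_mem ⟨hG, hsub (h.mem_blk_self hx)⟩

theorem GoodAx.conn_trans (h : GoodAx C) (h₁ : Conn C D x y) (h₂ : Conn C D y z) :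
    Conn C D x z := by
  obtain ⟨G₁, hG₁, hx₁, hy₁⟩ := h₁
  obtain ⟨G₂, hG₂, hy₂, hz₂⟩ := h₂
  have hU : ⋃₀ ({G₁, G₂} : Set (Set E)) ∈ C D := by
    refine h.unions D _ ?_ ⟨y, ?_⟩
    · intro G hG; rcases hG with rfl | rfl <;> assumption
    · rw [sInter_pair]; exact ⟨hy₁, hy₂⟩
  rw [sUnion_pair] at hU
  exact ⟨G₁ ∪ G₂, hU, Or.inl hx₁, Or.inr hz₂⟩

theorem GoodAx.blk_eq_of_conn (h : GoodAx C) (hc : Conn C D x y) :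
    Blk C D x = Blk C D y := by
  ext z
  constructor
  · intro hz
    exact mem_blk_of_conn (h.conn_trans hc.symm (conn_of_mem_blk hz))
  · intro hz
    exact mem_blk_of_conn (h.conn_trans hc (conn_of_mem_blk hz))

theorem GoodAx.maxGood_eq_blk (h : GoodAx C) {M : Set E} (hM : M ∈ maxGood C D)
    (hx : x ∈ M) : M = Blk C D x := by
  refine hM.2 _ (h.blk_mem (h.sub D M hM.1 hx)) ?_
  exact subset_sUnion_of_mem ⟨hM.1, hx⟩

theorem GoodAx.maxGood_nonempty (h : GoodAx C) (hD : D.Nonempty) {M : Set E}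
    (hM : M ∈ maxGood C D) : M.Nonempty := by
  rw [nonempty_iff_ne_empty]
  rintro rfl
  obtain ⟨d, hd⟩ := hD
  have := hM.2 {d} (h.singletons D d hd) (empty_subset _)
  exact (Set.singleton_ne_empty d) this.symm

theorem GoodAx.conn_mono (h : GoodAx C) (hWD : W ⊆ D) (hc : Conn C D x y)
    (hxW : x ∈ W) (hyW : y ∈ W) : Conn C W x y := by
  obtain ⟨G, hG, hx, hy⟩ := hc
  exact ⟨G ∩ W, h.restrict W D hWD G hG, ⟨hx, hxW⟩, ⟨hy, hyW⟩⟩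

theorem GoodAx.conn_sUnion (h : GoodAx C) {𝒟 : Set (Set E)} (hch : IsChain (· ⊆ ·) 𝒟)
    (hne : 𝒟.Nonempty)
    (hall : ∀ D' ∈ 𝒟, x ∈ D' ∧ y ∈ D' ∧ Conn C D' x y) : Conn C (⋃₀ 𝒟) x y := by
  set F : Set E := {z | z ∈ ⋃₀ 𝒟 ∧ ∀ D' ∈ 𝒟, z ∈ D' → z ∈ Blk C D' x} with hFdef
  obtain ⟨D₀, hD₀⟩ := hne
  have hF : F ∈ C (⋃₀ 𝒟) := by
    refine h.chain 𝒟 hch F (fun z hz => hz.1) ?_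
    intro D' hD'
    have hsub : F ∩ D' ⊆ Blk C D' x := fun z hz => hz.1.2 D' hD' hz.2
    exact h.subsets D' _ (h.blk_mem (hall D' hD').1) _ hsub
  refine ⟨F, hF, ⟨⟨D₀, hD₀, (hall D₀ hD₀).1⟩, ?_⟩, ⟨⟨D₀, hD₀, (hall D₀ hD₀).2.1⟩, ?_⟩⟩
  · exact fun D' hD' _ => h.mem_blk_self (hall D' hD').1
  · exact fun D' hD' _ => mem_blk_of_conn (hall D' hD').2.2

/-- Key lemma: if `x` and `y` are connected in every finite subset of `D` containing them,
then they are connected in `D`.  Proved by induction on the cardinality of `D`, writing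
`D` as the union of a chain of smaller subsets. -/
theorem GoodAx.conn_of_finite (h : GoodAx C) :
    ∀ D : Set E, ∀ x y : E, x ∈ D → y ∈ D →
      (∀ W : Set E, W ⊆ D → W.Finite → x ∈ W → y ∈ W → Conn C W x y) → Conn C D x y := by
  suffices H : ∀ κ : Cardinal, ∀ D : Set E, Cardinal.mk ↥D = κ → ∀ x y : E, x ∈ D → y ∈ D →
      (∀ W : Set E, W ⊆ D → W.Finite → x ∈ W → y ∈ W → Conn C W x y) → Conn C D x y from
    fun D x y hx hy hfin => H _ D rfl x y hx hy hfin
  intro κ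
  refine Cardinal.lt_wf.induction
    (C := fun κ => ∀ D : Set E, Cardinal.mk ↥D = κ → ∀ x y : E, x ∈ D → y ∈ D →
      (∀ W : Set E, W ⊆ D → W.Finite → x ∈ W → y ∈ W → Conn C W x y) → Conn C D x y)
    κ ?_
  clear κ
  intro κ IH D hκ x y hx hy hfin
  by_cases hDfin : D.Finite
  · exact hfin D subset_rfl hDfin hx hy
  have hinf : D.Infinite := hDfin
  obtain ⟨r, wo, hord⟩ := Cardinal.ord_eq ↥D
  haveI := wo
  haveI : Infinite ↥D := Set.infinite_coe_iff.2 hinf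
  set W : ↥D → Set E := fun t => {x, y} ∪ (Subtype.val '' {z | r z t}) with hWdef
  have hxW : ∀ t, x ∈ W t := fun t => Or.inl (Or.inl rfl)
  have hyW : ∀ t, y ∈ W t := fun t => Or.inl (Or.inr rfl)
  have hWD : ∀ t, W t ⊆ D := by
    intro t z hz
    rcases hz with hz | ⟨s, _, rfl⟩
    · rcases hz with rfl | rfl; exacts [hx, hy]
    · exact s.2
  have hmono : ∀ s t : ↥D, r s t → W s ⊆ W t := by
    intro s t hst z hz
    rcases hz with hz | ⟨u, hu, rfl⟩
    · exact Or.inl hz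
    · exact Or.inr ⟨u, _root_.trans hu hst, rfl⟩
  have hchain : IsChain (· ⊆ ·) (Set.range W) := by
    rintro _ ⟨s, rfl⟩ _ ⟨t, rfl⟩ _
    rcases trichotomous_of r s t with hst | rfl | hts
    · exact Or.inl (hmono s t hst)
    · exact Or.inl subset_rfl
    · exact Or.inr (hmono t s hts)
  have haleph : Cardinal.aleph0 ≤ Cardinal.mk ↥D := Cardinal.aleph0_le_mk ↥D
  have hlim : Order.IsSuccLimit (Cardinal.mk ↥D).ord := Cardinal.isSuccLimit_ord haleph
  have hsucc : ∀ s : ↥D, ∃ t : ↥D, r s t := by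
    intro s
    have h1 : Order.succ (Ordinal.typein r s) < Ordinal.type r := by
      rw [← hord]
      exact hlim.succ_lt (hord ▸ Ordinal.typein_lt_type r s)
    obtain ⟨t, ht⟩ := Ordinal.typein_surj r h1
    refine ⟨t, ?_⟩
    rw [← Ordinal.typein_lt_typein r, ht]
    exact Order.lt_succ _
  have hunion : ⋃₀ (Set.range W) = D := by
    apply subset_antisymm
    · rintro z ⟨_, ⟨t, rfl⟩, hz⟩; exact hWD t hz
    · intro d hd
      obtain ⟨t, ht⟩ := hsucc ⟨d, hd⟩
      exact ⟨W t, ⟨t, rfl⟩, Or.inr ⟨⟨d, hd⟩, ht, rfl⟩⟩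
  have hcard : ∀ t, Cardinal.mk ↥(W t) < Cardinal.mk ↥D := by
    intro t
    have h1 : Cardinal.mk ↥(W t) ≤
        Cardinal.mk ↥({x, y} : Set E) + Cardinal.mk ↥(Subtype.val '' {z | r z t}) :=
      Cardinal.mk_union_le _ _
    have h2 : Cardinal.mk ↥({x, y} : Set E) < Cardinal.mk ↥D :=
      lt_of_lt_of_le ((Set.toFinite _).lt_aleph0) haleph
    have h3 : Cardinal.mk ↥(Subtype.val '' {z | r z t}) < Cardinal.mk ↥D := by
      refine lt_of_le_of_lt (Cardinal.mk_image_le) ?_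
      have he : Cardinal.mk ↥{z | r z t} = Cardinal.mk {z // r z t} := rfl
      rw [he, ← Ordinal.card_typein]
      exact Cardinal.card_typein_lt (r := r) t hord
    exact lt_of_le_of_lt h1 (Cardinal.add_lt_of_lt haleph h2 h3)
  have hconn : ∀ t : ↥D, Conn C (W t) x y := by
    intro t
    refine IH (Cardinal.mk ↥(W t)) (hκ ▸ hcard t) (W t) rfl x y (hxW t) (hyW t) ?_
    intro V hV hVfin hxV hyV
    exact hfin V (hV.trans (hWD t)) hVfin hxV hyV
  have hne : (Set.range W).Nonempty := ⟨W (Classical.arbitrary ↥D), ⟨_, rfl⟩⟩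
  have hmain := h.conn_sUnion hchain hne
    (by rintro _ ⟨t, rfl⟩; exact ⟨hxW t, hyW t, hconn t⟩)
  rwa [hunion] at hmain

end GoodAux

/-- Given, for each `D ⊆ E`, a collection `C D` of `D`-good subsets satisfying
the goodness axioms (a)–(e), if the minimal good partition of `D` has finitely many blocks
then `D` contains a finite subset `F` whose minimal good partition has the same number of
blocks. -/
theorem finite_subset_with_same_good_partition_size {E : Type*} (C : Set E → Set (Set E))
    (h_sub : ∀ D : Set E, ∀ F ∈ C D, F ⊆ D)
    (h_singletons : ∀ D : Set E, ∀ x ∈ D, {x} ∈ C D)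
    (h_subsets : ∀ D : Set E, ∀ F ∈ C D, ∀ F' ⊆ F, F' ∈ C D)
    (h_unions : ∀ D : Set E, ∀ 𝒮 ⊆ C D, (⋂₀ 𝒮).Nonempty → ⋃₀ 𝒮 ∈ C D)
    (h_restrict : ∀ D₁ D₂ : Set E, D₁ ⊆ D₂ → ∀ F ∈ C D₂, F ∩ D₁ ∈ C D₁)
    (h_chain : ∀ 𝒟 : Set (Set E), IsChain (· ⊆ ·) 𝒟 → ∀ F ⊆ ⋃₀ 𝒟,
      (∀ D' ∈ 𝒟, F ∩ D' ∈ C D') → F ∈ C (⋃₀ 𝒟))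
    (D : Set E) (h_fin : (maxGood C D).Finite) :
    ∃ F : Set E, F ⊆ D ∧ F.Finite ∧ (maxGood C F).ncard = (maxGood C D).ncard := by
  classical
  open GoodAux in
  by_cases hDfin : D.Finite
  · exact ⟨D, subset_rfl, hDfin, rfl⟩
  have h : GoodAux.GoodAx C := ⟨h_sub, h_singletons, h_subsets, h_unions, h_restrict, h_chain⟩
  have hinf : D.Infinite := hDfin
  obtain ⟨e₀, he₀⟩ := hinf.nonempty
  set pt : Set E → E := fun M => if hM : M.Nonempty then hM.some else e₀ with hptdef
  have hpt_mem : ∀ M : Set E, M.Nonempty → pt M ∈ M := by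
    intro M hM
    simp only [hptdef, dif_pos hM]
    exact hM.some_mem
  have hptD : ∀ M ∈ maxGood C D, pt M ∈ M :=
    fun M hM => hpt_mem M (h.maxGood_nonempty hinf.nonempty hM)
  have hptinD : ∀ M ∈ maxGood C D, pt M ∈ D :=
    fun M hM => h_sub D M hM.1 (hptD M hM)
  have hwit : ∀ M ∈ maxGood C D, ∀ N ∈ maxGood C D, M ≠ N →
      ∃ Wt : Set E, Wt ⊆ D ∧ Wt.Finite ∧ pt M ∈ Wt ∧ pt N ∈ Wt ∧
        ¬ GoodAux.Conn C Wt (pt M) (pt N) := by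
    intro M hM N hN hMN
    by_contra hcon
    push_neg at hcon
    have hc : GoodAux.Conn C D (pt M) (pt N) :=
      h.conn_of_finite D (pt M) (pt N) (hptinD M hM) (hptinD N hN)
        (fun Wt hWt hWfin hxW hyW => hcon Wt hWt hWfin hxW hyW)
    have e1 : M = GoodAux.Blk C D (pt M) := h.maxGood_eq_blk hM (hptD M hM)
    have e2 : N = GoodAux.Blk C D (pt N) := h.maxGood_eq_blk hN (hptD N hN)
    exact hMN (by rw [e1, e2, h.blk_eq_of_conn hc])
  choose! Wit hW1 hW2 hW3 hW4 hW5 using hwit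
  set F : Set E := (⋃ M ∈ maxGood C D, ⋃ N ∈ maxGood C D, if M ≠ N then Wit M N else ∅)
      ∪ (pt '' maxGood C D) with hFdef
  have hWitF : ∀ M ∈ maxGood C D, ∀ N ∈ maxGood C D, M ≠ N → Wit M N ⊆ F := by
    intro M hM N hN hMN z hz
    rw [hFdef]
    refine Or.inl (Set.mem_biUnion hM (Set.mem_biUnion hN ?_))
    rw [if_pos hMN]; exact hz
  have hptF : ∀ M ∈ maxGood C D, pt M ∈ F := by
    intro M hM
    rw [hFdef]
    exact Or.inr ⟨M, hM, rfl⟩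
  have hFD : F ⊆ D := by
    rw [hFdef]
    rintro z (hz | ⟨M, hM, rfl⟩)
    · simp only [Set.mem_iUnion] at hz
      obtain ⟨M, hM, N, hN, hz⟩ := hz
      by_cases hMN : M ≠ N
      · rw [if_pos hMN] at hz; exact hW1 M hM N hN hMN hz
      · rw [if_neg hMN] at hz; exact absurd hz (Set.notMem_empty z)
    · exact hptinD M hM
  have hFfin : F.Finite := by
    rw [hFdef]
    refine Set.Finite.union ?_ (h_fin.image pt)
    refine Set.Finite.biUnion h_fin (fun M hM => Set.Finite.biUnion h_fin (fun N hN => ?_))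
    by_cases hMN : M ≠ N
    · rw [if_pos hMN]; exact hW2 M hM N hN hMN
    · rw [if_neg hMN]; exact Set.finite_empty
  have hFne : F.Nonempty := ⟨pt (GoodAux.Blk C D e₀), hptF _ (h.blk_maxGood he₀)⟩
  have hptFmem : ∀ M ∈ maxGood C F, pt M ∈ M :=
    fun M hM => hpt_mem M (h.maxGood_nonempty hFne hM)
  have hptFF : ∀ M ∈ maxGood C F, pt M ∈ F :=
    fun M hM => h_sub F M hM.1 (hptFmem M hM)
  -- injection from `maxGood C F` into `maxGood C D`
  have g2 : ∀ M ∈ maxGood C F, GoodAux.Blk C D (pt M) ∈ maxGood C D :=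
    fun M hM => h.blk_maxGood (hFD (hptFF M hM))
  have g2inj : Set.InjOn (fun M => GoodAux.Blk C D (pt M)) (maxGood C F) := by
    intro M hM N hN hMN
    have hMN' : GoodAux.Blk C D (pt M) = GoodAux.Blk C D (pt N) := hMN
    have hc : GoodAux.Conn C D (pt M) (pt N) := by
      apply GoodAux.conn_of_mem_blk
      rw [hMN']
      exact h.mem_blk_self (hFD (hptFF N hN))
    have hcF : GoodAux.Conn C F (pt M) (pt N) :=
      h.conn_mono hFD hc (hptFF M hM) (hptFF N hN)
    have e1 : M = GoodAux.Blk C F (pt M) := h.maxGood_eq_blk hM (hptFmem M hM)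
    have e2 : N = GoodAux.Blk C F (pt N) := h.maxGood_eq_blk hN (hptFmem N hN)
    rw [e1, e2, h.blk_eq_of_conn hcF]
  have hmaxFfin : (maxGood C F).Finite := by
    refine Set.Finite.of_finite_image (f := fun M => GoodAux.Blk C D (pt M)) ?_ g2inj
    exact h_fin.subset (by rintro _ ⟨M, hM, rfl⟩; exact g2 M hM)
  -- injection from `maxGood C D` into `maxGood C F`
  have g1 : ∀ M ∈ maxGood C D, GoodAux.Blk C F (pt M) ∈ maxGood C F :=
    fun M hM => h.blk_maxGood (hptF M hM)
  have g1inj : Set.InjOn (fun M => GoodAux.Blk C F (pt M)) (maxGood C D) := by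
    intro M hM N hN hMN
    by_contra hne'
    have hMN' : GoodAux.Blk C F (pt M) = GoodAux.Blk C F (pt N) := hMN
    have hcF : GoodAux.Conn C F (pt M) (pt N) := by
      apply GoodAux.conn_of_mem_blk
      rw [hMN']
      exact h.mem_blk_self (hptF N hN)
    have hcW : GoodAux.Conn C (Wit M N) (pt M) (pt N) :=
      h.conn_mono (hWitF M hM N hN hne') hcF (hW3 M hM N hN hne') (hW4 M hM N hN hne')
    exact hW5 M hM N hN hne' hcW
  refine ⟨F, hFD, hFfin, le_antisymm ?_ ?_⟩
  · exact Set.ncard_le_ncard_of_injOn _ g2 g2inj h_fin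
  · exact Set.ncard_le_ncard_of_injOn _ g1 g1inj hmaxFfin
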